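/- arXiv:1805.11732 — 5 statements merged into one kernel-verified Lean document; each statement's English description precedes it below -/
import Mathlib

section
/- Let A be a q×n real matrix whose rows are linearly independent, let b ∈ ℝ^q, and let f : ℝ^n → ℝ be convex and differentiable with ∇f Lipschitz continuous with constant L > 0 with respect to the Euclidean norm ‖·‖₂. Then the dual function θ(λ) = inf_{x ∈ ℝ^n} { f(x) + λᵀ(Ax − b) } is strongly concave on ℝ^q with constant of strong concavity λ_min(AAᵀ)/L with respect to ‖·‖₂ on ℝ^q. -/
open scoped RealInnerProductSpace Matrix
noncomputable section

/-- `ℝ^k` with the Euclidean norm. -/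
abbrev E (k : ℕ) := EuclideanSpace ℝ (Fin k)

/-- `θ : C → ℝ ∪ {−∞}` is strongly concave on `C` with constant `α` w.r.t. the Euclidean
norm: for all `u, v` in the domain of `θ` (points of `C` where `θ` is finite) and `t ∈ [0,1]`,
`θ(t u + (1−t) v) ≥ t θ(u) + (1−t) θ(v) + (α t (1−t)/2)‖u−v‖²`. -/
def StrongConcaveOnE {k : ℕ} (C : Set (E k)) (α : ℝ) (θ : E k → EReal) : Prop :=
  ∀ ⦃u⦄, u ∈ C → θ u ≠ ⊤ → θ u ≠ ⊥ → ∀ ⦃v⦄, v ∈ C → θ v ≠ ⊤ → θ v ≠ ⊥ →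
    ∀ t ∈ Set.Icc (0:ℝ) 1,
      ((t * (θ u).toReal + (1 - t) * (θ v).toReal
          + α * t * (1 - t) / 2 * ‖u - v‖ ^ 2 : ℝ) : EReal) ≤ θ (t • u + (1 - t) • v)

section Aux

variable {F : Type*} [NormedAddCommGroup F] [InnerProductSpace ℝ F] [CompleteSpace F]

lemma inner_eq_dot' {k : ℕ} (x y : EuclideanSpace ℝ (Fin k)) :
    ⟪x, y⟫ = (WithLp.equiv 2 (Fin k → ℝ) x) ⬝ᵥ (WithLp.equiv 2 (Fin k → ℝ) y) := by
  simp [PiLp.inner_apply, dotProduct, RCLike.inner_apply, mul_comm]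

/-- Descent lemma. -/
lemma descent_lemma (g : F → ℝ) (G : F → F) (hg : ∀ z, HasGradientAt g (G z) z)
    {L : ℝ} (hL : 0 < L) (hlip : LipschitzWith L.toNNReal G) (x y : F) :
    g y ≤ g x + ⟪G x, y - x⟫ + L / 2 * ‖y - x‖ ^ 2 := by
  set v := y - x with hv
  have hφ : ∀ s : ℝ, HasDerivAt (fun s : ℝ => g (x + s • v)) (⟪G (x + s • v), v⟫) s := by
    intro s
    have hpath : HasDerivAt (fun s : ℝ => x + s • v) v s := by
      simpa using ((hasDerivAt_id s).smul_const v).const_add x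
    have hfd : HasFDerivAt g (InnerProductSpace.toDual ℝ F (G (x + s • v))) (x + s • v) :=
      (hg _).hasFDerivAt
    have h := hfd.comp_hasDerivAt s hpath
    simp only [InnerProductSpace.toDual_apply_apply] at h
    exact h
  set ψ : ℝ → ℝ := fun s => g x + s * ⟪G x, v⟫ + s ^ 2 * (L / 2 * ‖v‖ ^ 2) - g (x + s • v)
    with hψdef
  have hψ : ∀ s : ℝ, HasDerivAt ψ
      (⟪G x, v⟫ + (2 * s) * (L / 2 * ‖v‖ ^ 2) - ⟪G (x + s • v), v⟫) s := by
    intro s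
    have h1 : HasDerivAt (fun s : ℝ => g x + s * ⟪G x, v⟫ + s ^ 2 * (L / 2 * ‖v‖ ^ 2))
        (⟪G x, v⟫ + (2 * s) * (L / 2 * ‖v‖ ^ 2)) s := by
      have ha : HasDerivAt (fun s : ℝ => s * ⟪G x, v⟫) (⟪G x, v⟫) s := by
        simpa using (hasDerivAt_id s).mul_const (⟪G x, v⟫)
      have hb : HasDerivAt (fun s : ℝ => s ^ 2 * (L / 2 * ‖v‖ ^ 2))
          ((2 * s ^ 1) * (L / 2 * ‖v‖ ^ 2)) s := by
        simpa using (hasDerivAt_pow 2 s).mul_const (L / 2 * ‖v‖ ^ 2)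
      exact ((ha.const_add (g x)).add hb).congr_deriv (by ring)
    exact h1.sub (hφ s)
  have hmono : MonotoneOn ψ (Set.Icc (0:ℝ) 1) := by
    apply monotoneOn_of_deriv_nonneg (convex_Icc 0 1)
    · have hd : Differentiable ℝ ψ := fun s => (hψ s).differentiableAt
      exact hd.continuous.continuousOn
    · exact fun s _ => ((hψ s).differentiableAt).differentiableWithinAt
    · intro s hs
      rw [interior_Icc] at hs
      rw [(hψ s).deriv]
      have hdist : ‖G (x + s • v) - G x‖ ≤ L * (s * ‖v‖) := by
        have := hlip.dist_le_mul (x + s • v) x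
        rw [dist_eq_norm, dist_eq_norm] at this
        calc ‖G (x + s • v) - G x‖ ≤ L.toNNReal * ‖x + s • v - x‖ := this
          _ = L * (s * ‖v‖) := by
              rw [Real.coe_toNNReal L hL.le]
              congr 1
              simp [norm_smul, abs_of_pos hs.1]
      have hinner : ⟪G (x + s • v) - G x, v⟫ ≤ L * (s * ‖v‖) * ‖v‖ :=
        le_trans (real_inner_le_norm _ _)
          (mul_le_mul_of_nonneg_right hdist (norm_nonneg v))
      rw [inner_sub_left] at hinner
      nlinarith [sq_nonneg ‖v‖, hs.1.le]
  have h01 := hmono (Set.mem_Icc.2 ⟨le_refl 0, zero_le_one⟩)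
    (Set.mem_Icc.2 ⟨zero_le_one, le_refl 1⟩) zero_le_one
  simp only [hψdef] at h01
  norm_num at h01
  have hy : x + v = y := by rw [hv]; abel
  rw [hy] at h01
  linarith

lemma grad_sq_le_aux (g : F → ℝ) (G : F → F) (hg : ∀ z, HasGradientAt g (G z) z)
    {L : ℝ} (hL : 0 < L) (hlip : LipschitzWith L.toNNReal G) (m : ℝ) (hm : ∀ z, m ≤ g z)
    (x : F) : m + ‖G x‖ ^ 2 / (2 * L) ≤ g x := by
  have h := descent_lemma g G hg hL hlip x (x - L⁻¹ • G x)
  have h2 := hm (x - L⁻¹ • G x)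
  have e1 : x - L⁻¹ • G x - x = -(L⁻¹ • G x) := by abel
  rw [e1] at h
  rw [inner_neg_right, real_inner_smul_right, real_inner_self_eq_norm_sq] at h
  have e2 : ‖-(L⁻¹ • G x)‖ ^ 2 = (L⁻¹) ^ 2 * ‖G x‖ ^ 2 := by
    rw [norm_neg, norm_smul, Real.norm_eq_abs, abs_of_pos (inv_pos.2 hL)]
    ring
  rw [e2] at h
  have hL' : L ≠ 0 := hL.ne'
  have key : -(L⁻¹ * ‖G x‖ ^ 2) + L / 2 * (L⁻¹ ^ 2 * ‖G x‖ ^ 2) = -(‖G x‖ ^ 2 / (2 * L)) := by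
    field_simp
    ring
  linarith [le_trans h2 h]

/-- Rayleigh-type lower bound. -/
lemma rayleigh_min {q n : ℕ} (A : Matrix (Fin q) (Fin n) ℝ) (hH : (A * Aᵀ).IsHermitian)
    (w : EuclideanSpace ℝ (Fin q)) :
    (⨅ i, hH.eigenvalues i) * ‖w‖ ^ 2 ≤
      ‖((WithLp.equiv 2 (Fin n → ℝ)).symm (Aᵀ *ᵥ (WithLp.equiv 2 (Fin q → ℝ) w)))‖ ^ 2 := by
  rcases isEmpty_or_nonempty (Fin q) with hq | hq
  · have hw : w = 0 := Subsingleton.elim w 0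
    subst hw
    simp [Real.iInf_of_isEmpty]
  · set B := hH.eigenvectorBasis with hB
    set e := hH.eigenvalues with he
    set T := Matrix.toEuclideanLin (A * Aᵀ) with hT
    have hMB : ∀ j, T (B j) = e j • B j := fun j => WithLp.ofLp_injective 2 (hH.mulVec_eigenvectorBasis j)
    set c : Fin q → ℝ := fun i => ⟪B i, w⟫ with hc
    have hTw : T w = ∑ i, (c i * e i) • B i := by
      conv_lhs => rw [← B.sum_repr' w]
      rw [map_sum]
      refine Finset.sum_congr rfl fun i _ => ?_
      rw [map_smul, hMB, smul_smul]
    have hiTw : ⟪w, T w⟫ = ∑ i, e i * c i ^ 2 := by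
      rw [hTw, inner_sum]
      refine Finset.sum_congr rfl fun i _ => ?_
      rw [real_inner_smul_right, real_inner_comm]
      ring
    have hnw : ‖w‖ ^ 2 = ∑ i, c i ^ 2 := by
      rw [← real_inner_self_eq_norm_sq, ← B.sum_inner_mul_inner w w]
      refine Finset.sum_congr rfl fun i _ => ?_
      simp only [hc, real_inner_comm (B i) w]
      ring
    have hray : (⨅ i, e i) * ‖w‖ ^ 2 ≤ ⟪w, T w⟫ := by
      rw [hiTw, hnw, Finset.mul_sum]
      refine Finset.sum_le_sum fun i _ => ?_
      exact mul_le_mul_of_nonneg_right (ciInf_le (Set.finite_range e).bddBelow i) (sq_nonneg _)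
    refine le_trans hray ?_
    have hTw' : WithLp.equiv 2 (Fin q → ℝ) (T w) = (A * Aᵀ) *ᵥ (WithLp.equiv 2 (Fin q → ℝ) w) :=
      rfl
    rw [inner_eq_dot', hTw', ← Matrix.mulVec_mulVec, Matrix.dotProduct_mulVec,
      ← Matrix.mulVec_transpose]
    rw [← real_inner_self_eq_norm_sq, inner_eq_dot']
    simp only [Equiv.apply_symm_apply]
    exact le_refl _

lemma ereal_coe_iInf {ι : Type*} [Nonempty ι] (h : ι → ℝ) (hb : BddBelow (Set.range h)) :
    (⨅ i, ((h i : ℝ) : EReal)) = (((⨅ i, h i : ℝ)) : EReal) :=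
  (Monotone.map_ciInf_of_continuousAt (continuous_coe_real_ereal.continuousAt)
    (fun _ _ hxy => EReal.coe_le_coe_iff.2 hxy) hb).symm

lemma bddBelow_of_iInf_ne_bot {ι : Type*} [Nonempty ι] (h : ι → ℝ)
    (hne : (⨅ i, ((h i : ℝ) : EReal)) ≠ ⊥) : BddBelow (Set.range h) := by
  by_contra hnb
  apply hne
  rw [iInf_eq_bot]
  intro b hb
  induction b using EReal.rec with
  | bot => exact absurd hb (lt_irrefl _)
  | coe r' =>
    rcases not_bddBelow_iff.1 hnb r' with ⟨y, ⟨i, hi⟩, hy⟩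
    exact ⟨i, by rw [hi]; exact_mod_cast hy⟩
  | top =>
    obtain ⟨i⟩ := (inferInstance : Nonempty ι)
    exact ⟨i, EReal.coe_lt_top _⟩

lemma hasGradientAt_inner_const {k : ℕ} (c : EuclideanSpace ℝ (Fin k))
    (x : EuclideanSpace ℝ (Fin k)) : HasGradientAt (fun z => ⟪c, z⟫) c x := by
  rw [hasGradientAt_iff_hasFDerivAt]
  have h := (InnerProductSpace.toDual ℝ (EuclideanSpace ℝ (Fin k)) c).hasFDerivAt (x := x)
  exact h.congr_of_eventuallyEq (Filter.Eventually.of_forall fun z =>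
    (InnerProductSpace.toDual_apply_apply (𝕜 := ℝ)).symm)

/-- `Aᵀλ` as an element of `ℝⁿ`. -/
def cvecAux {n q : ℕ} (A : Matrix (Fin q) (Fin n) ℝ) (lam : EuclideanSpace ℝ (Fin q)) :
    EuclideanSpace ℝ (Fin n) :=
  (WithLp.equiv 2 (Fin n → ℝ)).symm (Aᵀ *ᵥ (WithLp.equiv 2 (Fin q → ℝ) lam))

lemma cvecAux_sub {n q : ℕ} (A : Matrix (Fin q) (Fin n) ℝ)
    (u v : EuclideanSpace ℝ (Fin q)) : cvecAux A u - cvecAux A v = cvecAux A (u - v) := by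
  simp [cvecAux, WithLp.ofLp_sub, Matrix.mulVec_sub, WithLp.toLp_sub, WithLp.equiv_symm_apply]

lemma dot_affine_eq {n q : ℕ} (A : Matrix (Fin q) (Fin n) ℝ) (b : Fin q → ℝ)
    (lam : EuclideanSpace ℝ (Fin q)) (z : EuclideanSpace ℝ (Fin n)) :
    (lam : Fin q → ℝ) ⬝ᵥ (A.mulVec z - b) = ⟪cvecAux A lam, z⟫ - (lam : Fin q → ℝ) ⬝ᵥ b := by
  rw [inner_eq_dot', cvecAux, Equiv.apply_symm_apply, Matrix.mulVec_transpose,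
    ← Matrix.dotProduct_mulVec, dotProduct_sub]
  rfl

lemma hasGradientAt_dual {n q : ℕ} (A : Matrix (Fin q) (Fin n) ℝ) (b : Fin q → ℝ)
    (f : EuclideanSpace ℝ (Fin n) → ℝ) (hdiff : Differentiable ℝ f)
    (lam : EuclideanSpace ℝ (Fin q)) (x : EuclideanSpace ℝ (Fin n)) :
    HasGradientAt (fun z => f z + (lam : Fin q → ℝ) ⬝ᵥ (A.mulVec z - b))
      (gradient f x + cvecAux A lam) x := by
  have heq : (fun z : EuclideanSpace ℝ (Fin n) => f z + (lam : Fin q → ℝ) ⬝ᵥ (A.mulVec z - b))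
      = fun z => (f z + ⟪cvecAux A lam, z⟫) + (-((lam : Fin q → ℝ) ⬝ᵥ b)) := by
    funext z
    rw [dot_affine_eq]
    ring
  rw [heq]
  have h1 : HasGradientAt (fun z : EuclideanSpace ℝ (Fin n) => f z + ⟪cvecAux A lam, z⟫)
      (gradient f x + cvecAux A lam) x := by
    rw [hasGradientAt_iff_hasFDerivAt, map_add]
    exact ((hdiff x).hasGradientAt.hasFDerivAt).add
      ((hasGradientAt_inner_const (cvecAux A lam) x).hasFDerivAt)
  rw [hasGradientAt_iff_hasFDerivAt] at h1 ⊢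
  exact h1.add_const _

end Aux

/-- If the rows of the `q×n` matrix `A` are linearly independent, and `f : ℝ^n → ℝ` is convex,
differentiable, with `∇f` Lipschitz with constant `L > 0` w.r.t. `‖·‖₂`, then the dual function
`θ(λ) = inf_x { f(x) + λᵀ(Ax − b) }` is strongly concave on `ℝ^q` with constant
`λ_min(AAᵀ)/L` w.r.t. `‖·‖₂`. -/
theorem dual_function_strongly_concave_linear_constraints
    {n q : ℕ} (A : Matrix (Fin q) (Fin n) ℝ) (b : Fin q → ℝ)
    (hrows : LinearIndependent ℝ (fun i : Fin q => A i))
    (hH : (A * Aᵀ).IsHermitian)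
    (f : E n → ℝ) (hconv : ConvexOn ℝ Set.univ f) (hdiff : Differentiable ℝ f)
    (L : ℝ) (hL : 0 < L)
    (hlip : LipschitzWith (Real.toNNReal L) (fun x => gradient f x)) :
    StrongConcaveOnE Set.univ ((⨅ i, hH.eigenvalues i) / L)
      (fun lam => ⨅ x : E n, ((f x + (lam : Fin q → ℝ) ⬝ᵥ (A.mulVec x - b) : ℝ) : EReal)) := by
  intro u _ hut hub v _ hvt hvb t ht
  obtain ⟨ht0, ht1⟩ := ht
  have ht1' : (0:ℝ) ≤ 1 - t := by linarith
  -- the Lipschitz gradient maps of the perturbed objectives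
  have hlipG : ∀ lam : E q, LipschitzWith L.toNNReal
      (fun x : E n => gradient f x + cvecAux A lam) := by
    intro lam
    apply LipschitzWith.of_dist_le_mul
    intro a b'
    simpa [dist_add_right] using hlip.dist_le_mul a b'
  -- lower bounds from finiteness
  have hub' : (⨅ x : E n, ((f x + (u : Fin q → ℝ) ⬝ᵥ (A.mulVec x - b) : ℝ) : EReal)) ≠ ⊥ := hub
  have hvb' : (⨅ x : E n, ((f x + (v : Fin q → ℝ) ⬝ᵥ (A.mulVec x - b) : ℝ) : EReal)) ≠ ⊥ := hvb
  have hbu : BddBelow (Set.range fun x : E n => f x + (u : Fin q → ℝ) ⬝ᵥ (A.mulVec x - b)) :=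
    bddBelow_of_iInf_ne_bot _ hub'
  have hbv : BddBelow (Set.range fun x : E n => f x + (v : Fin q → ℝ) ⬝ᵥ (A.mulVec x - b)) :=
    bddBelow_of_iInf_ne_bot _ hvb'
  set mu : ℝ := ⨅ x : E n, (f x + (u : Fin q → ℝ) ⬝ᵥ (A.mulVec x - b)) with hmu_def
  set mv : ℝ := ⨅ x : E n, (f x + (v : Fin q → ℝ) ⬝ᵥ (A.mulVec x - b)) with hmv_def
  have hmu : ∀ z : E n, mu ≤ f z + (u : Fin q → ℝ) ⬝ᵥ (A.mulVec z - b) :=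
    fun z => ciInf_le hbu z
  have hmv : ∀ z : E n, mv ≤ f z + (v : Fin q → ℝ) ⬝ᵥ (A.mulVec z - b) :=
    fun z => ciInf_le hbv z
  have hθu : (⨅ x : E n, ((f x + (u : Fin q → ℝ) ⬝ᵥ (A.mulVec x - b) : ℝ) : EReal))
      = ((mu : ℝ) : EReal) := ereal_coe_iInf _ hbu
  have hθv : (⨅ x : E n, ((f x + (v : Fin q → ℝ) ⬝ᵥ (A.mulVec x - b) : ℝ) : EReal))
      = ((mv : ℝ) : EReal) := ereal_coe_iInf _ hbv
  show ((t * (⨅ x : E n, ((f x + (u : Fin q → ℝ) ⬝ᵥ (A.mulVec x - b) : ℝ) : EReal)).toReal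
      + (1 - t) * (⨅ x : E n, ((f x + (v : Fin q → ℝ) ⬝ᵥ (A.mulVec x - b) : ℝ) : EReal)).toReal
      + (⨅ i, hH.eigenvalues i) / L * t * (1 - t) / 2 * ‖u - v‖ ^ 2 : ℝ) : EReal)
      ≤ ⨅ x : E n, ((f x + ((t • u + (1 - t) • v : E q) : Fin q → ℝ) ⬝ᵥ (A.mulVec x - b) : ℝ)
        : EReal)
  rw [hθu, hθv, EReal.toReal_coe, EReal.toReal_coe]
  refine le_iInf fun x => ?_
  rw [EReal.coe_le_coe_iff]
  -- pure real inequality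
  set pu : E n := gradient f x + cvecAux A u with hpu_def
  set pv : E n := gradient f x + cvecAux A v with hpv_def
  have h1 : mu + ‖pu‖ ^ 2 / (2 * L) ≤ f x + (u : Fin q → ℝ) ⬝ᵥ (A.mulVec x - b) := by
    have := grad_sq_le_aux (fun z : E n => f z + (u : Fin q → ℝ) ⬝ᵥ (A.mulVec z - b))
      (fun z => gradient f z + cvecAux A u) (fun z => hasGradientAt_dual A b f hdiff u z)
      hL (hlipG u) mu hmu x
    exact this
  have h2 : mv + ‖pv‖ ^ 2 / (2 * L) ≤ f x + (v : Fin q → ℝ) ⬝ᵥ (A.mulVec x - b) := by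
    have := grad_sq_le_aux (fun z : E n => f z + (v : Fin q → ℝ) ⬝ᵥ (A.mulVec z - b))
      (fun z => gradient f z + cvecAux A v) (fun z => hasGradientAt_dual A b f hdiff v z)
      hL (hlipG v) mv hmv x
    exact this
  have hsplit : ((t • u + (1 - t) • v : E q) : Fin q → ℝ) ⬝ᵥ (A.mulVec x - b)
      = t * ((u : Fin q → ℝ) ⬝ᵥ (A.mulVec x - b))
        + (1 - t) * ((v : Fin q → ℝ) ⬝ᵥ (A.mulVec x - b)) := by
    show (t • (u : Fin q → ℝ) + (1 - t) • (v : Fin q → ℝ)) ⬝ᵥ (A.mulVec x - b) = _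
    rw [add_dotProduct, smul_dotProduct, smul_dotProduct,
      smul_eq_mul, smul_eq_mul]
  rw [hsplit]
  -- rayleigh bound
  have hray : (⨅ i, hH.eigenvalues i) * ‖u - v‖ ^ 2 ≤ ‖pu - pv‖ ^ 2 := by
    have hpc : pu - pv = cvecAux A (u - v) := by
      rw [hpu_def, hpv_def, add_sub_add_left_eq_sub, cvecAux_sub]
    rw [hpc]
    exact rayleigh_min A hH (u - v)
  -- convexity-type quadratic bound
  have hQ : t * (1 - t) * ‖pu - pv‖ ^ 2 ≤ t * ‖pu‖ ^ 2 + (1 - t) * ‖pv‖ ^ 2 := by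
    have e1 : ‖t • pu + (1 - t) • pv‖ ^ 2
        = t ^ 2 * ‖pu‖ ^ 2 + 2 * (t * (1 - t)) * ⟪pu, pv⟫ + (1 - t) ^ 2 * ‖pv‖ ^ 2 := by
      rw [norm_add_sq_real, real_inner_smul_left, real_inner_smul_right, norm_smul, norm_smul,
        Real.norm_eq_abs, Real.norm_eq_abs, abs_of_nonneg ht0, abs_of_nonneg ht1']
      ring
    have e2 : ‖pu - pv‖ ^ 2 = ‖pu‖ ^ 2 - 2 * ⟪pu, pv⟫ + ‖pv‖ ^ 2 := norm_sub_sq_real pu pv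
    nlinarith [sq_nonneg ‖t • pu + (1 - t) • pv‖]
  have hden : (0:ℝ) < 2 * L := by linarith
  have c1 : (⨅ i, hH.eigenvalues i) / L * t * (1 - t) / 2 * ‖u - v‖ ^ 2
      ≤ (t * ‖pu‖ ^ 2 + (1 - t) * ‖pv‖ ^ 2) / (2 * L) := by
    have step1 : (⨅ i, hH.eigenvalues i) * ‖u - v‖ ^ 2 * (t * (1 - t))
        ≤ ‖pu - pv‖ ^ 2 * (t * (1 - t)) :=
      mul_le_mul_of_nonneg_right hray (mul_nonneg ht0 ht1')
    have step2 : ‖pu - pv‖ ^ 2 * (t * (1 - t)) ≤ t * ‖pu‖ ^ 2 + (1 - t) * ‖pv‖ ^ 2 := by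
      nlinarith [hQ]
    calc (⨅ i, hH.eigenvalues i) / L * t * (1 - t) / 2 * ‖u - v‖ ^ 2
        = ((⨅ i, hH.eigenvalues i) * ‖u - v‖ ^ 2 * (t * (1 - t))) / (2 * L) := by ring
      _ ≤ (t * ‖pu‖ ^ 2 + (1 - t) * ‖pv‖ ^ 2) / (2 * L) :=
          div_le_div_of_nonneg_right (step1.trans step2) hden.le
  have hdist : (t * ‖pu‖ ^ 2 + (1 - t) * ‖pv‖ ^ 2) / (2 * L)
      = t * (‖pu‖ ^ 2 / (2 * L)) + (1 - t) * (‖pv‖ ^ 2 / (2 * L)) := by ring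
  have h1' := mul_le_mul_of_nonneg_left h1 ht0
  have h2' := mul_le_mul_of_nonneg_left h2 ht1'
  nlinarith [h1', h2', c1, hdist]
end
end

section
/- Let Q₀ be a nonzero symmetric positive semidefinite n×n real matrix, let a₀ ∈ Im(Q₀), b₀ ∈ ℝ, and let f(x) = ½ xᵀQ₀x + a₀ᵀx + b₀. Let Q₀⁺ be the Moore–Penrose pseudoinverse of Q₀, i.e., the unique matrix P satisfying Q₀PQ₀ = Q₀, PQ₀P = P, (Q₀P)ᵀ = Q₀P and (PQ₀)ᵀ = PQ₀. Then the Fenchel conjugate of f satisfies f*(x) = −b₀ + ½ (x−a₀)ᵀ Q₀⁺ (x−a₀) for every x ∈ Im(Q₀), and f*(x) = +∞ for every x ∉ Im(Q₀). -/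
open scoped Matrix
open scoped RealInnerProductSpace
noncomputable section

/-- The Fenchel conjugate (w.r.t. the standard scalar product of `ℝ^n`) of a real-valued
function: `f*(x*) = sup_x (⟨x*, x⟩ − f(x))`, an extended-real value. -/
def fenchelConjR {n : ℕ} (f : (Fin n → ℝ) → ℝ) (y : Fin n → ℝ) : EReal :=
  ⨆ x : Fin n → ℝ, ((y ⬝ᵥ x - f x : ℝ) : EReal)

/-- Let `Q₀` be a nonzero symmetric positive semidefinite matrix, `a₀ ∈ Im(Q₀)`, `b₀ ∈ ℝ`, and
`f(x) = ½ xᵀQ₀x + a₀ᵀx + b₀`. If `P = Q₀⁺` is the Moore–Penrose pseudoinverse of `Q₀`, then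
`f*(x) = −b₀ + ½ (x−a₀)ᵀ Q₀⁺ (x−a₀)` for `x ∈ Im(Q₀)` and `f*(x) = +∞` for `x ∉ Im(Q₀)`. -/
theorem conjugate_of_quadratic
    {n : ℕ} (Q₀ : Matrix (Fin n) (Fin n) ℝ) (hQ : Q₀.PosSemidef) (hQ0 : Q₀ ≠ 0)
    (a₀ : Fin n → ℝ) (ha₀ : a₀ ∈ LinearMap.range Q₀.mulVecLin) (b₀ : ℝ)
    (P : Matrix (Fin n) (Fin n) ℝ)
    (hP1 : Q₀ * P * Q₀ = Q₀) (hP2 : P * Q₀ * P = P)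
    (hP3 : (Q₀ * P)ᵀ = Q₀ * P) (hP4 : (P * Q₀)ᵀ = P * Q₀) :
    (∀ x ∈ LinearMap.range Q₀.mulVecLin,
        fenchelConjR (fun v => 1/2 * (v ⬝ᵥ Q₀.mulVec v) + a₀ ⬝ᵥ v + b₀) x
          = ((-b₀ + 1/2 * ((x - a₀) ⬝ᵥ P.mulVec (x - a₀)) : ℝ) : EReal)) ∧
      (∀ x : Fin n → ℝ, x ∉ LinearMap.range Q₀.mulVecLin →
        fenchelConjR (fun v => 1/2 * (v ⬝ᵥ Q₀.mulVec v) + a₀ ⬝ᵥ v + b₀) x = ⊤) := by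
  obtain ⟨t, ht⟩ := ha₀
  rw [Matrix.mulVecLin_apply] at ht
  have hsymT : Q₀ᵀ = Q₀ := by
    rw [← Matrix.conjTranspose_eq_transpose_of_trivial]; exact hQ.1
  -- symmetry of the associated bilinear form
  have hsd : ∀ u v : Fin n → ℝ, (Q₀ *ᵥ u) ⬝ᵥ v = u ⬝ᵥ (Q₀ *ᵥ v) := by
    intro u v
    rw [Matrix.dotProduct_mulVec, ← Matrix.mulVec_transpose, hsymT]
  have hpsd : ∀ v : Fin n → ℝ, 0 ≤ v ⬝ᵥ (Q₀ *ᵥ v) := by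
    intro v
    simpa using hQ.dotProduct_mulVec_nonneg v
  have hexp : ∀ u v : Fin n → ℝ, (u - v) ⬝ᵥ Q₀ *ᵥ (u - v)
      = u ⬝ᵥ (Q₀ *ᵥ u) - 2 * (u ⬝ᵥ (Q₀ *ᵥ v)) + v ⬝ᵥ (Q₀ *ᵥ v) := by
    intro u v
    have h1 : v ⬝ᵥ (Q₀ *ᵥ u) = u ⬝ᵥ (Q₀ *ᵥ v) := by
      rw [← hsd v u, dotProduct_comm]
    rw [Matrix.mulVec_sub, dotProduct_sub, sub_dotProduct,
      sub_dotProduct, h1]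
    ring
  constructor
  · rintro x ⟨s, rfl⟩
    obtain ⟨u, hu⟩ : ∃ u : Fin n → ℝ, u = s - t := ⟨_, rfl⟩
    have hxa : Q₀.mulVecLin s - a₀ = Q₀ *ᵥ u := by
      rw [hu, Matrix.mulVecLin_apply, ← ht, Matrix.mulVec_sub]
    have hxeq : Q₀.mulVecLin s = Q₀ *ᵥ u + a₀ := by rw [← hxa]; abel
    have hval : (Q₀.mulVecLin s - a₀) ⬝ᵥ P.mulVec (Q₀.mulVecLin s - a₀) = u ⬝ᵥ (Q₀ *ᵥ u) := by
      rw [hxa, hsd, Matrix.mulVec_mulVec, Matrix.mulVec_mulVec, hP1]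
    have hdot : ∀ v : Fin n → ℝ, (Q₀.mulVecLin s) ⬝ᵥ v = u ⬝ᵥ (Q₀ *ᵥ v) + a₀ ⬝ᵥ v := by
      intro v
      rw [hxeq, add_dotProduct, hsd]
    rw [hval, fenchelConjR]
    apply le_antisymm
    · apply iSup_le
      intro v
      rw [EReal.coe_le_coe_iff]
      have key := hpsd (u - v)
      rw [hexp u v] at key
      rw [hdot v]
      linarith
    · refine le_iSup_of_le u (le_of_eq ?_)
      congr 1
      rw [hdot u]
      ring
  · intro x hx
    -- find a vector in the kernel of `Q₀` not orthogonal to `x`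
    set e := WithLp.linearEquiv 2 ℝ (Fin n → ℝ) with he
    set K : Submodule ℝ (EuclideanSpace ℝ (Fin n)) :=
      (LinearMap.range Q₀.mulVecLin).comap (e : EuclideanSpace ℝ (Fin n) →ₗ[ℝ] (Fin n → ℝ))
      with hK
    have hip : ∀ u v : EuclideanSpace ℝ (Fin n), ⟪u, v⟫ = (e u) ⬝ᵥ (e v) := by
      intro u v
      simp [PiLp.inner_apply, RCLike.inner_apply, dotProduct, he, mul_comm]
    have hx' : e.symm x ∉ K := by
      simp only [hK, Submodule.mem_comap, LinearEquiv.coe_coe, LinearEquiv.apply_symm_apply]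
      exact hx
    obtain ⟨y, hy, z, hz, hxyz⟩ := K.exists_add_mem_mem_orthogonal (e.symm x)
    have hzne : z ≠ 0 := by
      rintro rfl
      rw [add_zero] at hxyz
      exact hx' (hxyz ▸ hy)
    have hKz : ∀ v : Fin n → ℝ, (Q₀ *ᵥ v) ⬝ᵥ (e z) = 0 := by
      intro v
      have hm : e.symm (Q₀ *ᵥ v) ∈ K := by
        simp only [hK, Submodule.mem_comap, LinearEquiv.coe_coe, LinearEquiv.apply_symm_apply]
        exact ⟨v, Matrix.mulVecLin_apply _ _⟩
      have h0 := hz _ hm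
      rw [hip] at h0
      simpa using h0
    have hQw : Q₀ *ᵥ (e z) = 0 := by
      have h0 := hKz (Q₀ *ᵥ (e z))
      rw [hsd] at h0
      exact dotProduct_self_eq_zero.mp h0
    have hxw : 0 < x ⬝ᵥ (e z) := by
      have h1 : x ⬝ᵥ (e z) = ⟪e.symm x, z⟫ := by
        rw [hip, LinearEquiv.apply_symm_apply]
      rw [h1, hxyz, inner_add_left, hz y hy, zero_add, real_inner_self_eq_norm_sq]
      have := norm_pos_iff.mpr hzne
      positivity
    have haw : a₀ ⬝ᵥ (e z) = 0 := by rw [← ht]; exact hKz t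
    -- now the supremum is `⊤`
    rw [fenchelConjR, iSup_eq_top]
    intro b hb
    obtain ⟨r, hbr, -⟩ := EReal.lt_iff_exists_real_btwn.mp hb
    set d : ℝ := x ⬝ᵥ (e z) with hd
    set c : ℝ := (r + b₀ + 1) / d with hc
    refine ⟨c • (e z), ?_⟩
    have hQsw : Q₀.mulVec (c • (e z)) = 0 := by
      rw [Matrix.mulVec_smul, hQw, smul_zero]
    have hcomp : (x ⬝ᵥ (c • (e z))
        - (1/2 * ((c • (e z)) ⬝ᵥ Q₀.mulVec (c • (e z)))
          + a₀ ⬝ᵥ (c • (e z)) + b₀) : ℝ) = r + 1 := by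
      rw [dotProduct_smul, dotProduct_smul, haw, smul_zero, hQsw,
        dotProduct_zero, smul_eq_mul, ← hd, hc]
      field_simp
      ring
    calc b < (r : EReal) := hbr
      _ ≤ ((r + 1 : ℝ) : EReal) := by exact_mod_cast (by linarith : r ≤ r + 1)
      _ = _ := by rw [hcomp]
end
end

section
/- Let X ⊆ ℝ^n be a set, f : ℝ^n → ℝ, A a q×n real matrix, b ∈ ℝ^q, and g : ℝ^n → ℝ^p. Define the value function v(c₁, c₂) = inf { f(x) : x ∈ X, Ax − b + c₁ ≤ 0, g(x) + c₂ ≤ 0 } for (c₁, c₂) ∈ ℝ^q × ℝ^p, and the dual function θ(λ, μ) = inf { f(x) + λᵀ(Ax − b) + μᵀ g(x) : x ∈ X }. Then for every (λ, μ) ∈ ℝ₊^q × ℝ₊^p (componentwise nonnegative), the Fenchel conjugate of v satisfies v*(λ, μ) = −θ(λ, μ) (equality of extended reals). -/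
open scoped Matrix
noncomputable section

private lemma my_neg_iInf {ι : Sort*} (f : ι → EReal) : -(⨅ i, f i) = ⨆ i, -f i := by
  apply le_antisymm
  · rw [EReal.neg_le]
    exact le_iInf fun i => EReal.neg_le.mp (le_iSup (fun i => -f i) i)
  · exact iSup_le fun i => EReal.neg_le_neg_iff.2 (iInf_le f i)

/-- Conjugate of value-function identity: for `v(c₁,c₂) = inf { f(x) : x ∈ X, Ax − b + c₁ ≤ 0,
g(x) + c₂ ≤ 0 }` and `θ(λ,μ) = inf { f(x) + λᵀ(Ax − b) + μᵀg(x) : x ∈ X }`, one has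
`v*(λ, μ) = −θ(λ, μ)` for every componentwise nonnegative `(λ, μ)` (equality in `ℝ ∪ {±∞}`). -/
theorem conjugate_of_value_function_eq_neg_dual
    {n q p : ℕ} (X : Set (Fin n → ℝ)) (f : (Fin n → ℝ) → ℝ)
    (A : Matrix (Fin q) (Fin n) ℝ) (b : Fin q → ℝ)
    (g : (Fin n → ℝ) → Fin p → ℝ)
    (lam : Fin q → ℝ) (μ : Fin p → ℝ)
    (hlam : ∀ i, 0 ≤ lam i) (hμ : ∀ j, 0 ≤ μ j) :
    (⨆ c : (Fin q → ℝ) × (Fin p → ℝ),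
        ((lam ⬝ᵥ c.1 + μ ⬝ᵥ c.2 : ℝ) : EReal)
          - ⨅ (x : Fin n → ℝ) (_ : x ∈ X)
              (_ : ∀ i, A.mulVec x i - b i + c.1 i ≤ 0)
              (_ : ∀ j, g x j + c.2 j ≤ 0), ((f x : ℝ) : EReal)) =
      -(⨅ (x : Fin n → ℝ) (_ : x ∈ X),
          ((f x + lam ⬝ᵥ (A.mulVec x - b) + μ ⬝ᵥ g x : ℝ) : EReal)) := by
  set L : (Fin n → ℝ) → ℝ := fun x => f x + lam ⬝ᵥ (A.mulVec x - b) + μ ⬝ᵥ g x with hL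
  set S : EReal := ⨆ (x : Fin n → ℝ) (_ : x ∈ X), ((-L x : ℝ) : EReal) with hS
  have hRHS : -(⨅ (x : Fin n → ℝ) (_ : x ∈ X), ((L x : ℝ) : EReal)) = S := by
    rw [my_neg_iInf]
    refine iSup_congr fun x => ?_
    rw [my_neg_iInf]
    exact iSup_congr fun _ => by rw [← EReal.coe_neg]
  rw [hRHS]
  apply le_antisymm
  · -- sup over c ≤ S
    refine iSup_le fun c => ?_
    set a : ℝ := lam ⬝ᵥ c.1 + μ ⬝ᵥ c.2 with ha
    -- key: for feasible x, (a - f x : ℝ) ≤ -L x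
    have key : ∀ x : Fin n → ℝ, x ∈ X → (∀ i, A.mulVec x i - b i + c.1 i ≤ 0) →
        (∀ j, g x j + c.2 j ≤ 0) → a - f x ≤ -L x := by
      intro x hx h1 h2
      have e1 : lam ⬝ᵥ c.1 ≤ -(lam ⬝ᵥ (A.mulVec x - b)) := by
        rw [← dotProduct_neg]
        refine Finset.sum_le_sum fun i _ => ?_
        have := h1 i
        have : c.1 i ≤ -(A.mulVec x - b) i := by simp [Pi.neg_apply, Pi.sub_apply]; linarith
        exact mul_le_mul_of_nonneg_left this (hlam i)
      have e2 : μ ⬝ᵥ c.2 ≤ -(μ ⬝ᵥ g x) := by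
        rw [← dotProduct_neg]
        refine Finset.sum_le_sum fun j _ => ?_
        have : c.2 j ≤ -(g x j) := by linarith [h2 j]
        exact mul_le_mul_of_nonneg_left this (hμ j)
      simp only [hL]
      linarith
    by_cases hStop : S = ⊤
    · rw [hStop]; exact le_top
    · have hv : ((a : ℝ) : EReal) - S ≤
          ⨅ (x : Fin n → ℝ) (_ : x ∈ X)
            (_ : ∀ i, A.mulVec x i - b i + c.1 i ≤ 0)
            (_ : ∀ j, g x j + c.2 j ≤ 0), ((f x : ℝ) : EReal) := by
        refine le_iInf fun x => le_iInf fun hx => le_iInf fun h1 => le_iInf fun h2 => ?_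
        have h3 : ((a - f x : ℝ) : EReal) ≤ S := by
          refine le_trans ?_ (le_iSup_of_le x (le_iSup_of_le hx le_rfl))
          exact EReal.coe_le_coe_iff.2 (key x hx h1 h2)
        have h4 : ((a : ℝ) : EReal) ≤ S + (f x : ℝ) := by
          rw [← EReal.sub_le_iff_le_add (Or.inl (EReal.coe_ne_bot _))
            (Or.inl (EReal.coe_ne_top _)), ← EReal.coe_sub]
          exact h3
        rw [EReal.sub_le_iff_le_add (Or.inr (EReal.coe_ne_top _))
          (Or.inr (EReal.coe_ne_bot _))]
        rw [add_comm] at h4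
        exact h4
      have hSbotcase : ((a : ℝ) : EReal) - (((a : ℝ) : EReal) - S) ≤ S := by
        by_cases hSb : S = ⊥
        · rw [hSb, EReal.coe_sub_bot, EReal.sub_top]
        · obtain ⟨s, hs⟩ : ∃ s : ℝ, S = (s : EReal) :=
            ⟨S.toReal, (EReal.coe_toReal hStop hSb).symm⟩
          rw [hs, ← EReal.coe_sub, ← EReal.coe_sub, EReal.coe_le_coe_iff]
          linarith
      exact le_trans (EReal.sub_le_sub le_rfl hv) hSbotcase
  · -- S ≤ sup over c
    refine iSup_le fun x => iSup_le fun hx => ?_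
    set c : (Fin q → ℝ) × (Fin p → ℝ) :=
      (fun i => b i - A.mulVec x i, fun j => -(g x j)) with hc
    refine le_trans ?_ (le_iSup _ c)
    have hfeas1 : ∀ i, A.mulVec x i - b i + c.1 i ≤ 0 := fun i => by simp [hc]
    have hfeas2 : ∀ j, g x j + c.2 j ≤ 0 := fun j => by simp [hc]
    have hvle : (⨅ (y : Fin n → ℝ) (_ : y ∈ X)
        (_ : ∀ i, A.mulVec y i - b i + c.1 i ≤ 0)
        (_ : ∀ j, g y j + c.2 j ≤ 0), ((f y : ℝ) : EReal)) ≤ ((f x : ℝ) : EReal) :=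
      iInf_le_of_le x (iInf_le_of_le hx (iInf_le_of_le hfeas1 (iInf_le _ hfeas2)))
    have ha : (lam ⬝ᵥ c.1 + μ ⬝ᵥ c.2 : ℝ) - f x = -L x := by
      simp only [hc, hL]
      have e1 : lam ⬝ᵥ (fun i => b i - A.mulVec x i) = -(lam ⬝ᵥ (A.mulVec x - b)) := by
        rw [← dotProduct_neg]
        congr 1
        ext i
        simp [Pi.neg_apply, Pi.sub_apply]
      have e2 : μ ⬝ᵥ (fun j => -(g x j)) = -(μ ⬝ᵥ g x) := by
        rw [← dotProduct_neg]
        congr 1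
      rw [e1, e2]; ring
    calc ((-L x : ℝ) : EReal) = (((lam ⬝ᵥ c.1 + μ ⬝ᵥ c.2 : ℝ) - f x : ℝ) : EReal) := by rw [ha]
      _ = ((lam ⬝ᵥ c.1 + μ ⬝ᵥ c.2 : ℝ) : EReal) - ((f x : ℝ) : EReal) := EReal.coe_sub _ _
      _ ≤ _ := EReal.sub_le_sub le_rfl hvle
end
end

section
/- Let f : ℝ^n → ℝ be continuous and strongly convex with constant α > 0 with respect to ‖·‖₂, let g₁, …, g_p : ℝ^n → ℝ be continuous and convex, let A be a q×n real matrix and b ∈ ℝ^q. For every (λ, μ) ∈ ℝ^q × ℝ₊^p the function x ↦ f(x) + λᵀ(Ax − b) + μᵀ g(x) (where g = (g₁, …, g_p)) attains a unique minimizer x(λ, μ) over ℝ^n, and the map (λ, μ) ↦ x(λ, μ) is continuous on ℝ^q × ℝ₊^p. -/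
open scoped RealInnerProductSpace Matrix
noncomputable section

/-- The Lagrangian `x ↦ f(x) + λᵀ(Ax − b) + μᵀg(x)` for the pair `lm = (λ, μ)`. -/
def lagrangianLNL {n q p : ℕ} (f : E n → ℝ) (g : Fin p → E n → ℝ)
    (A : Matrix (Fin q) (Fin n) ℝ) (b : Fin q → ℝ) (lm : E q × E p) (x : E n) : ℝ :=
  f x + (lm.1 : Fin q → ℝ) ⬝ᵥ (A.mulVec x - b) + ∑ i, lm.2 i * g i x

section Aux

variable {n q p : ℕ} (f : E n → ℝ) (g : Fin p → E n → ℝ)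
    (A : Matrix (Fin q) (Fin n) ℝ) (b : Fin q → ℝ)

def vmapL (x : E n) : E q := (WithLp.equiv 2 (Fin q → ℝ)).symm (A.mulVec x - b)
def GmapL (x : E n) : E p := (WithLp.equiv 2 (Fin p → ℝ)).symm (fun i => g i x)

lemma lag_repr (lm : E q × E p) (x : E n) :
    lagrangianLNL f g A b lm x = f x + ⟪lm.1, vmapL A b x⟫ + ⟪lm.2, GmapL g x⟫ := by
  simp [lagrangianLNL, vmapL, GmapL, PiLp.inner_apply, RCLike.inner_apply, conj_trivial,
    dotProduct, mul_sub, Finset.sum_sub_distrib, mul_comm]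

def MnormL (x : E n) : ℝ := ‖vmapL A b x‖ + ‖GmapL g x‖

lemma Mnorm_nonneg (x : E n) : 0 ≤ MnormL g A b x :=
  add_nonneg (norm_nonneg _) (norm_nonneg _)

lemma lag_diff (lm lm' : E q × E p) (x : E n) :
    |lagrangianLNL f g A b lm x - lagrangianLNL f g A b lm' x|
      ≤ ‖lm - lm'‖ * MnormL g A b x := by
  have h1 : lagrangianLNL f g A b lm x - lagrangianLNL f g A b lm' x
      = ⟪lm.1 - lm'.1, vmapL A b x⟫ + ⟪lm.2 - lm'.2, GmapL g x⟫ := by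
    rw [lag_repr, lag_repr, inner_sub_left, inner_sub_left]; ring
  rw [h1]
  have h2 : ‖lm.1 - lm'.1‖ ≤ ‖lm - lm'‖ := by
    simpa using norm_fst_le (lm - lm')
  have h3 : ‖lm.2 - lm'.2‖ ≤ ‖lm - lm'‖ := by
    simpa using norm_snd_le (lm - lm')
  calc |⟪lm.1 - lm'.1, vmapL A b x⟫ + ⟪lm.2 - lm'.2, GmapL g x⟫|
      ≤ |⟪lm.1 - lm'.1, vmapL A b x⟫| + |⟪lm.2 - lm'.2, GmapL g x⟫| := abs_add_le _ _
    _ ≤ ‖lm.1 - lm'.1‖ * ‖vmapL A b x‖ + ‖lm.2 - lm'.2‖ * ‖GmapL g x‖ := by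
        gcongr <;> exact abs_real_inner_le_norm _ _
    _ ≤ ‖lm - lm'‖ * ‖vmapL A b x‖ + ‖lm - lm'‖ * ‖GmapL g x‖ := by
        gcongr
    _ = ‖lm - lm'‖ * MnormL g A b x := by rw [MnormL]; ring

lemma vmap_cont : Continuous (vmapL A b (n := n)) := by
  refine (PiLp.continuous_toLp 2 (fun _ : Fin q => ℝ)).comp ?_
  refine Continuous.sub ?_ continuous_const
  exact (Matrix.mulVecLin A).continuous_of_finiteDimensional.comp
    (PiLp.continuous_ofLp 2 (fun _ : Fin n => ℝ))

lemma Gmap_cont (hgc : ∀ i, Continuous (g i)) : Continuous (GmapL g) :=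
  (PiLp.continuous_toLp 2 (fun _ : Fin p => ℝ)).comp (continuous_pi fun i => hgc i)

lemma Mnorm_cont (hgc : ∀ i, Continuous (g i)) : Continuous (MnormL g A b) :=
  ((vmap_cont A b).norm.add (Gmap_cont g hgc).norm)

lemma lag_cont (hfc : Continuous f) (hgc : ∀ i, Continuous (g i)) (lm : E q × E p) :
    Continuous (lagrangianLNL f g A b lm) := by
  have h : lagrangianLNL f g A b lm
      = fun x => f x + ⟪lm.1, vmapL A b x⟫ + ⟪lm.2, GmapL g x⟫ := funext (lag_repr f g A b lm)
  rw [h]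
  exact (hfc.add (continuous_const.inner (vmap_cont A b))).add
    (continuous_const.inner (Gmap_cont g hgc))

lemma dot_affine (c : E q) (x y : E n) (a a' : ℝ) (h : a + a' = 1) :
    (c : Fin q → ℝ) ⬝ᵥ (A.mulVec (a • x + a' • y) - b)
      = a * ((c : Fin q → ℝ) ⬝ᵥ (A.mulVec x - b))
        + a' * ((c : Fin q → ℝ) ⬝ᵥ (A.mulVec y - b)) := by
  have key : ∀ z : E n, (c : Fin q → ℝ) ⬝ᵥ (A.mulVec z - b)
      = (∑ i, ∑ j, c i * A i j * z j) - ∑ i, c i * b i := by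
    intro z
    simp [dotProduct, Matrix.mulVec, mul_sub, Finset.sum_sub_distrib, Finset.mul_sum,
      mul_assoc]
  rw [key, key, key]
  have h2 : ∀ i j, c i * A i j * (a • (x : Fin n → ℝ) + a' • (y : Fin n → ℝ)) j
      = a * (c i * A i j * x j) + a' * (c i * A i j * y j) := by
    intro i j
    have hj : (a • (x : Fin n → ℝ) + a' • (y : Fin n → ℝ)) j = a * x j + a' * y j := by
      simp [PiLp.add_apply, PiLp.smul_apply, smul_eq_mul]
    rw [hj]; ring
  simp only [h2, Finset.sum_add_distrib, ← Finset.mul_sum]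
  linear_combination (∑ i, c i * b i) * h

variable {α : ℝ}

lemma lag_sconv (hfsc : StrongConvexOn Set.univ α f)
    (hgconv : ∀ i, ConvexOn ℝ Set.univ (g i)) (lm : E q × E p) (hμ : ∀ i, 0 ≤ lm.2 i) :
    StrongConvexOn Set.univ α (lagrangianLNL f g A b lm) := by
  refine ⟨convex_univ, fun x _ y _ a a' ha ha' hab => ?_⟩
  have h1 := hfsc.2 (Set.mem_univ x) (Set.mem_univ y) ha ha' hab
  simp only [smul_eq_mul] at h1
  have h2 := dot_affine A b lm.1 x y a a' hab
  have h3 : ∑ i, lm.2 i * g i (a • x + a' • y)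
      ≤ a * (∑ i, lm.2 i * g i x) + a' * (∑ i, lm.2 i * g i y) := by
    rw [Finset.mul_sum, Finset.mul_sum, ← Finset.sum_add_distrib]
    refine Finset.sum_le_sum fun i _ => ?_
    have hi := (hgconv i).2 (Set.mem_univ x) (Set.mem_univ y) ha ha' hab
    simp only [smul_eq_mul] at hi
    have hμi := hμ i
    nlinarith [mul_le_mul_of_nonneg_left hi hμi]
  calc lagrangianLNL f g A b lm (a • x + a' • y)
      = f (a • x + a' • y) + (lm.1 : Fin q → ℝ) ⬝ᵥ (A.mulVec (a • x + a' • y) - b)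
        + ∑ i, lm.2 i * g i (a • x + a' • y) := rfl
    _ ≤ (a * f x + a' * f y - a * a' * (α / 2 * ‖x - y‖ ^ 2))
        + (a * ((lm.1 : Fin q → ℝ) ⬝ᵥ (A.mulVec x - b))
          + a' * ((lm.1 : Fin q → ℝ) ⬝ᵥ (A.mulVec y - b)))
        + (a * (∑ i, lm.2 i * g i x) + a' * (∑ i, lm.2 i * g i y)) := by
        exact add_le_add (add_le_add h1 (le_of_eq h2)) h3
    _ = a • lagrangianLNL f g A b lm x + a' • lagrangianLNL f g A b lm y
        - a * a' * (α / 2 * ‖x - y‖ ^ 2) := by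
        simp only [lagrangianLNL, smul_eq_mul]; ring

lemma growth_at_min {h : E n → ℝ} (hsc : StrongConvexOn Set.univ α h) {z : E n}
    (hmin : ∀ y, h z ≤ h y) (x : E n) : h z + α / 4 * ‖x - z‖ ^ 2 ≤ h x := by
  have h1 := hsc.2 (Set.mem_univ x) (Set.mem_univ z)
    (by norm_num : (0:ℝ) ≤ 1/2) (by norm_num : (0:ℝ) ≤ 1/2) (by norm_num)
  simp only [smul_eq_mul] at h1
  have h2 := hmin ((1/2 : ℝ) • x + (1/2 : ℝ) • z)
  nlinarith [h1, h2]

lemma exists_min_of_strongConvex {h : E n → ℝ} (hc : Continuous h) (hα : 0 < α)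
    (hsc : StrongConvexOn Set.univ α h) : ∃ z : E n, ∀ y, h z ≤ h y := by
  obtain ⟨m, hm⟩ : ∃ m, ∀ z ∈ Metric.closedBall (0 : E n) 1, m ≤ h z := by
    obtain ⟨z0, _, hz0⟩ := (isCompact_closedBall (0 : E n) 1).exists_isMinOn
      ⟨0, by simp⟩ hc.continuousOn
    exact ⟨h z0, fun z hz => hz0 hz⟩
  have key : ∀ x : E n, 1 ≤ ‖x‖ →
      h 0 + ‖x‖ * (m - h 0) + α / 2 * (‖x‖ ^ 2 - ‖x‖) ≤ h x := by
    intro x hx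
    have hr : (0:ℝ) < ‖x‖ := lt_of_lt_of_le one_pos hx
    have ht0 : (0:ℝ) ≤ 1 / ‖x‖ := by positivity
    have ht1 : (0:ℝ) ≤ 1 - 1 / ‖x‖ := by
      rw [sub_nonneg, div_le_one hr]; exact hx
    have hsum : 1 / ‖x‖ + (1 - 1 / ‖x‖) = 1 := by ring
    have h1 := hsc.2 (Set.mem_univ x) (Set.mem_univ (0 : E n)) ht0 ht1 hsum
    have hz : (1 / ‖x‖) • x + (1 - 1 / ‖x‖) • (0 : E n) = (1 / ‖x‖) • x := by simp
    rw [hz] at h1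
    have hmem : (1 / ‖x‖) • x ∈ Metric.closedBall (0 : E n) 1 := by
      rw [Metric.mem_closedBall, dist_zero_right, norm_smul, Real.norm_eq_abs,
        abs_of_nonneg ht0]
      rw [div_mul_cancel₀ 1 (ne_of_gt hr)]
    have h2 := hm _ hmem
    simp only [smul_eq_mul, sub_zero] at h1
    have h3 := h2.trans h1
    have h4 := mul_le_mul_of_nonneg_left h3 hr.le
    have h5 : ‖x‖ * (1 / ‖x‖ * h x + (1 - 1 / ‖x‖) * h 0
        - 1 / ‖x‖ * (1 - 1 / ‖x‖) * (α / 2 * ‖x‖ ^ 2))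
        = h x + (‖x‖ - 1) * h 0 - α / 2 * (‖x‖ ^ 2 - ‖x‖) := by
      field_simp
    rw [h5] at h4
    linarith [h4]
  have hq : Filter.Tendsto (fun r : ℝ => h 0 + r * (m - h 0) + α / 2 * (r ^ 2 - r))
      Filter.atTop Filter.atTop := by
    have heq : (fun r : ℝ => h 0 + r * (m - h 0) + α / 2 * (r ^ 2 - r))
        = fun r => r * (α / 2 * r + (m - h 0 - α / 2)) + h 0 := by funext r; ring
    rw [heq]
    refine Filter.tendsto_atTop_add_const_right _ _ ?_
    refine Filter.Tendsto.atTop_mul_atTop₀ Filter.tendsto_id ?_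
    refine Filter.tendsto_atTop_add_const_right _ _ ?_
    exact (Filter.tendsto_id (α := ℝ)).const_mul_atTop (by positivity : (0:ℝ) < α / 2)
  have hcoer : Filter.Tendsto h (Filter.cocompact (E n)) Filter.atTop := by
    have hnorm : Filter.Tendsto (fun x : E n => ‖x‖) (Filter.cocompact _) Filter.atTop :=
      tendsto_norm_cocompact_atTop
    refine Filter.tendsto_atTop_mono' _ ?_ (hq.comp hnorm)
    filter_upwards [hnorm.eventually (Filter.eventually_ge_atTop 1)] with x hx
    exact key x hx
  exact hc.exists_forall_le hcoer

end Aux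

/-- If `f` is continuous and strongly convex with constant `α > 0` w.r.t. `‖·‖₂` and the `gᵢ`
are continuous and convex, then for every `(λ, μ) ∈ ℝ^q × ℝ₊^p` the Lagrangian
`x ↦ f(x) + λᵀ(Ax − b) + μᵀg(x)` attains a unique minimizer `x(λ, μ)` over `ℝ^n`, and
`(λ, μ) ↦ x(λ, μ)` is continuous on `ℝ^q × ℝ₊^p`. -/
theorem lagrangian_unique_minimizer_continuous
    {n q p : ℕ} (f : E n → ℝ) (hfc : Continuous f)
    (α : ℝ) (hα : 0 < α) (hfsc : StrongConvexOn Set.univ α f)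
    (g : Fin p → E n → ℝ)
    (hgc : ∀ i, Continuous (g i)) (hgconv : ∀ i, ConvexOn ℝ Set.univ (g i))
    (A : Matrix (Fin q) (Fin n) ℝ) (b : Fin q → ℝ) :
    ∃ xmin : E q × E p → E n,
      (∀ lm : E q × E p, (∀ i, 0 ≤ lm.2 i) →
        (∀ x : E n, lagrangianLNL f g A b lm (xmin lm) ≤ lagrangianLNL f g A b lm x) ∧
        (∀ x : E n, (∀ y : E n, lagrangianLNL f g A b lm x ≤ lagrangianLNL f g A b lm y) →
          x = xmin lm)) ∧
      ContinuousOn xmin {lm : E q × E p | ∀ i, 0 ≤ lm.2 i} := by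
  classical
  have hex : ∀ lm : E q × E p, (∀ i, 0 ≤ lm.2 i) →
      ∃ z : E n, ∀ y, lagrangianLNL f g A b lm z ≤ lagrangianLNL f g A b lm y := by
    intro lm hlm
    exact exists_min_of_strongConvex (lag_cont f g A b hfc hgc lm) hα
      (lag_sconv f g A b hfsc hgconv lm hlm)
  choose! xm hxm using hex
  refine ⟨xm, fun lm hlm => ⟨hxm lm hlm, ?_⟩, ?_⟩
  · -- uniqueness
    intro x hx
    have hg1 := growth_at_min (lag_sconv f g A b hfsc hgconv lm hlm) (hxm lm hlm) x
    have hg2 := hx (xm lm)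
    have hsq : ‖x - xm lm‖ ^ 2 ≤ 0 := by nlinarith
    have h0 : ‖x - xm lm‖ = 0 := by nlinarith [norm_nonneg (x - xm lm), sq_nonneg ‖x - xm lm‖]
    exact sub_eq_zero.mp (norm_eq_zero.mp h0)
  · -- continuity
    rw [Metric.continuousOn_iff]
    intro a ha ε hε
    simp only [Set.mem_setOf_eq] at ha
    set x₀ := xm a with hx₀
    have hgrow := growth_at_min (lag_sconv f g A b hfsc hgconv a ha) (hxm a ha)
    set r : ℝ := ε / 2 with hrdef
    have hrpos : 0 < r := by positivity
    obtain ⟨C, hC0, hC⟩ : ∃ C, 0 ≤ C ∧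
        ∀ z ∈ Metric.closedBall x₀ r, MnormL g A b z ≤ C := by
      obtain ⟨z0, _, hz0⟩ := (isCompact_closedBall x₀ r).exists_isMaxOn
        ⟨x₀, Metric.mem_closedBall_self hrpos.le⟩ (Mnorm_cont g A b hgc).continuousOn
      exact ⟨MnormL g A b z0, Mnorm_nonneg g A b z0, fun z hz => hz0 hz⟩
    have hden : (0:ℝ) < 2 * C + 1 := by linarith
    have hnum : (0:ℝ) < α / 4 * r ^ 2 := by positivity
    refine ⟨min 1 ((α / 4 * r ^ 2) / (2 * C + 1)), lt_min one_pos (div_pos hnum hden),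
      fun lm hlmS hd => ?_⟩
    simp only [Set.mem_setOf_eq] at hlmS
    have hδ2 : dist lm a < (α / 4 * r ^ 2) / (2 * C + 1) :=
      lt_of_lt_of_le hd (min_le_right _ _)
    have hδ0 : 0 ≤ dist lm a := dist_nonneg
    have hkey : dist lm a * (2 * C) < α / 4 * r ^ 2 := by
      have h1 : dist lm a * (2 * C + 1) < α / 4 * r ^ 2 := by
        rw [← lt_div_iff₀ hden]; exact hδ2
      nlinarith
    have hna : ‖lm - a‖ = dist lm a := (dist_eq_norm lm a).symm
    -- claim: on the sphere of radius r around x₀, L lm is strictly above L lm x₀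
    have claim : ∀ z : E n, ‖z - x₀‖ = r →
        lagrangianLNL f g A b lm x₀ < lagrangianLNL f g A b lm z := by
      intro z hz
      have hzball : z ∈ Metric.closedBall x₀ r := by
        rw [Metric.mem_closedBall, dist_eq_norm, hz]
      have hx₀ball : x₀ ∈ Metric.closedBall x₀ r := Metric.mem_closedBall_self hrpos.le
      have d1 := (abs_le.mp (lag_diff f g A b lm a z)).1
      have d2 := (abs_le.mp (lag_diff f g A b lm a x₀)).2
      rw [hna] at d1 d2
      have e1 : dist lm a * MnormL g A b z ≤ dist lm a * C :=
        mul_le_mul_of_nonneg_left (hC z hzball) hδ0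
      have e2 : dist lm a * MnormL g A b x₀ ≤ dist lm a * C :=
        mul_le_mul_of_nonneg_left (hC x₀ hx₀ball) hδ0
      have hgz := hgrow z
      rw [hz] at hgz
      nlinarith [d1, d2, e1, e2, hgz, hkey]
    -- the minimizer of L lm must be within distance < r of x₀
    have hle : lagrangianLNL f g A b lm (xm lm) ≤ lagrangianLNL f g A b lm x₀ := hxm lm hlmS x₀
    rcases lt_or_ge ‖xm lm - x₀‖ r with hlt | hge
    · rw [dist_eq_norm]
      refine hlt.trans ?_
      rw [hrdef]; linarith
    · exfalso
      have hd0 : (0:ℝ) < ‖xm lm - x₀‖ := lt_of_lt_of_le hrpos hge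
      set t : ℝ := r / ‖xm lm - x₀‖ with htdef
      have ht0 : 0 ≤ t := by positivity
      have ht1 : t ≤ 1 := by
        rw [htdef, div_le_one hd0]; exact hge
      set z : E n := (1 - t) • x₀ + t • xm lm with hzdef
      have hzsub : z - x₀ = t • (xm lm - x₀) := by
        rw [hzdef, smul_sub, sub_smul, one_smul]; abel
      have hznorm : ‖z - x₀‖ = r := by
        rw [hzsub, norm_smul, Real.norm_eq_abs, abs_of_nonneg ht0, htdef,
          div_mul_cancel₀ r (ne_of_gt hd0)]
      have hzlt := claim z hznorm
      have hconv := (lag_sconv f g A b hfsc hgconv lm hlmS).2 (Set.mem_univ x₀)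
        (Set.mem_univ (xm lm)) (by linarith : (0:ℝ) ≤ 1 - t) ht0 (by ring)
      simp only [smul_eq_mul] at hconv
      rw [← hzdef] at hconv
      nlinarith [hconv, hzlt, hle, mul_nonneg (mul_nonneg (by linarith : (0:ℝ) ≤ 1 - t) ht0)
        (mul_nonneg (le_of_lt (by positivity : (0:ℝ) < α / 2)) (sq_nonneg ‖x₀ - xm lm‖))]
end
end

section
/- Let X ⊆ ℝ^m and Y ⊆ ℝ^n be nonempty compact convex sets and let f : ℝ^n × ℝ^m → ℝ be convex and differentiable on Y × X. Define 𝒬(x) = inf_{y ∈ Y} f(y, x) for x ∈ X. Fix x̄ ∈ X, ε ≥ 0, and let ŷ ∈ Y be an ε-optimal solution, i.e., f(ŷ, x̄) ≤ 𝒬(x̄) + ε. Set η = max_{y ∈ Y} ⟨∇_y f(ŷ, x̄), ŷ − y⟩ (which is nonnegative). Then the affine function C(x) = f(ŷ, x̄) − η + ⟨∇_x f(ŷ, x̄), x − x̄⟩ satisfies 𝒬(x) ≥ C(x) for every x ∈ X, and 𝒬(x̄) − C(x̄) ≤ η. -/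
open scoped RealInnerProductSpace Matrix
noncomputable section

/-- The value function `𝒬(x) = inf_{y ∈ Y} f(y, x)` (as an extended real). -/
def Qfix {n m : ℕ} (Y : Set (E n)) (f : E n × E m → ℝ) (x : E m) : EReal :=
  ⨅ (y : E n) (_ : y ∈ Y), ((f (y, x) : ℝ) : EReal)

/-- First-order gradient inequality for a convex function. -/
lemma convexOn_fderiv_le {F : Type*} [NormedAddCommGroup F] [NormedSpace ℝ F]
    {S : Set F} {f : F → ℝ} {φ : F →L[ℝ] ℝ} {p z : F}
    (hf : ConvexOn ℝ S f) (hp : p ∈ S) (hz : z ∈ S)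
    (hd : HasFDerivAt f φ p) : f p + φ (z - p) ≤ f z := by
  set v := z - p with hv
  set g : ℝ → ℝ := fun t => f (p + t • v) with hgdef
  have hmem : ∀ t ∈ Set.Icc (0:ℝ) 1, p + t • v ∈ S := by
    intro t ht
    have : p + t • v = (1 - t) • p + t • z := by
      rw [hv]; module
    rw [this]
    exact hf.1 hp hz (by linarith [ht.2]) ht.1 (by ring)
  have hg : ConvexOn ℝ (Set.Icc (0:ℝ) 1) g := by
    refine ⟨convex_Icc 0 1, ?_⟩
    intro s hs t ht a b ha hb hab
    have h1 : p + (a * s + b * t) • v = a • (p + s • v) + b • (p + t • v) := by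
      have hb' : b = 1 - a := by linarith
      subst hb'
      module
    show f (p + (a * s + b * t) • v) ≤ a * f (p + s • v) + b * f (p + t • v)
    rw [h1]
    exact hf.2 (hmem s hs) (hmem t ht) ha hb hab
  have hc : HasDerivAt (fun t : ℝ => p + t • v) v 0 :=
    ((hasDerivAt_id (0:ℝ)).smul_const v).const_add p |>.congr_deriv (one_smul ℝ v)
  have hg0 : HasDerivAt g (φ v) 0 := by
    have hd' : HasFDerivAt f φ (p + (0:ℝ) • v) := by simpa using hd
    have := hd'.comp_hasDerivAt (0:ℝ) hc
    exact this
  have hslope := hg.le_slope_of_hasDerivAt (Set.left_mem_Icc.2 zero_le_one)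
    (Set.right_mem_Icc.2 zero_le_one) zero_lt_one hg0
  have : slope g 0 1 = f z - f p := by
    simp [slope, hgdef, hv]
  rw [this] at hslope
  linarith

/-- Inexact cut with fixed feasible set: if `ŷ ∈ Y` is an `ε`-optimal solution of
`𝒬(x̄) = inf_{y ∈ Y} f(y, x̄)` and `η = max_{y ∈ Y} ⟨∇_y f(ŷ, x̄), ŷ − y⟩` (which is
nonnegative), then `C(x) = f(ŷ, x̄) − η + ⟨∇_x f(ŷ, x̄), x − x̄⟩` satisfies `𝒬(x) ≥ C(x)` on
`X` and `𝒬(x̄) − C(x̄) ≤ η`. -/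
theorem inexact_cut_fixed_feasible_set
    {n m : ℕ} (X : Set (E m)) (Y : Set (E n))
    (hXne : X.Nonempty) (hXcp : IsCompact X) (hXcv : Convex ℝ X)
    (hYne : Y.Nonempty) (hYcp : IsCompact Y) (hYcv : Convex ℝ Y)
    (f : E n × E m → ℝ)
    (hconv : ConvexOn ℝ (Y ×ˢ X) f)
    (hdiff : ∀ pt ∈ Y ×ˢ X, DifferentiableAt ℝ f pt)
    (xb : E m) (hxb : xb ∈ X)
    (ε : ℝ) (hε : 0 ≤ ε)
    (yh : E n) (hyh : yh ∈ Y)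
    (hepsopt : ((f (yh, xb) : ℝ) : EReal) ≤ Qfix Y f xb + (ε : EReal))
    (η : ℝ)
    (hη : IsGreatest
      ((fun y : E n => ⟪gradient (fun y' => f (y', xb)) yh, yh - y⟫) '' Y) η) :
    0 ≤ η ∧
    (∀ x ∈ X,
      ((f (yh, xb) - η + ⟪gradient (fun x' => f (yh, x')) xb, x - xb⟫ : ℝ) : EReal)
        ≤ Qfix Y f x) ∧
    Qfix Y f xb ≤
      ((f (yh, xb) - η + ⟪gradient (fun x' => f (yh, x')) xb, xb - xb⟫ + η : ℝ) : EReal) := by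
  have hmemp : (yh, xb) ∈ Y ×ˢ X := ⟨hyh, hxb⟩
  have hdp : DifferentiableAt ℝ f (yh, xb) := hdiff _ hmemp
  set φ : E n × E m →L[ℝ] ℝ := fderiv ℝ f (yh, xb) with hφ
  have hdf : HasFDerivAt f φ (yh, xb) := hdp.hasFDerivAt
  -- partial derivatives
  have hdy : HasFDerivAt (fun y' => f (y', xb))
      (φ.comp (ContinuousLinearMap.inl ℝ (E n) (E m))) yh := by
    have h1 : HasFDerivAt (fun y' : E n => (y', xb))
        (ContinuousLinearMap.inl ℝ (E n) (E m)) yh :=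
      HasFDerivAt.prodMk (hasFDerivAt_id yh) (hasFDerivAt_const xb yh)
    exact hdf.comp yh h1
  have hdx : HasFDerivAt (fun x' => f (yh, x'))
      (φ.comp (ContinuousLinearMap.inr ℝ (E n) (E m))) xb := by
    have h1 : HasFDerivAt (fun x' : E m => (yh, x'))
        (ContinuousLinearMap.inr ℝ (E n) (E m)) xb :=
      HasFDerivAt.prodMk (hasFDerivAt_const yh xb) (hasFDerivAt_id xb)
    exact hdf.comp xb h1
  have hgy : ∀ u : E n, ⟪gradient (fun y' => f (y', xb)) yh, u⟫ = φ (u, 0) := by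
    intro u
    rw [gradient, hdy.fderiv, InnerProductSpace.toDual_symm_apply]
    rfl
  have hgx : ∀ w : E m, ⟪gradient (fun x' => f (yh, x')) xb, w⟫ = φ (0, w) := by
    intro w
    rw [gradient, hdx.fderiv, InnerProductSpace.toDual_symm_apply]
    rfl
  have hη0 : 0 ≤ η := by
    have : (0:ℝ) ∈ (fun y : E n => ⟪gradient (fun y' => f (y', xb)) yh, yh - y⟫) '' Y :=
      ⟨yh, hyh, by simp⟩
    exact hη.2 this
  refine ⟨hη0, ?_, ?_⟩
  · intro x hx
    rw [Qfix]
    refine le_iInf₂ fun y hy => ?_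
    rw [EReal.coe_le_coe_iff]
    -- gradient inequality
    have hkey := convexOn_fderiv_le hconv hmemp (⟨hy, hx⟩ : (y, x) ∈ Y ×ˢ X) hdf
    have hsplit : φ ((y, x) - (yh, xb)) = φ (y - yh, 0) + φ (0, x - xb) := by
      rw [← map_add]
      congr 1
      simp [Prod.ext_iff]
    have hbnd : ⟪gradient (fun y' => f (y', xb)) yh, yh - y⟫ ≤ η :=
      hη.2 ⟨y, hy, rfl⟩
    have h1 : φ (y - yh, 0) = -⟪gradient (fun y' => f (y', xb)) yh, yh - y⟫ := by
      rw [hgy, ← map_neg]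
      congr 1
      simp [Prod.ext_iff]
    have h2 : ⟪gradient (fun x' => f (yh, x')) xb, x - xb⟫ = φ (0, x - xb) := hgx _
    rw [hsplit, h1] at hkey
    linarith
  · have hQle : Qfix Y f xb ≤ ((f (yh, xb) : ℝ) : EReal) := by
      rw [Qfix]
      exact iInf_le_of_le yh (iInf_le_of_le hyh le_rfl)
    have : (f (yh, xb) - η + ⟪gradient (fun x' => f (yh, x')) xb, xb - xb⟫ + η : ℝ)
        = f (yh, xb) := by
      simp
    rw [this]
    exact hQle
end
end
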